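/- arXiv:1902.10450 — 2 statements merged into one kernel-verified Lean document; each statement's English description precedes it below -/
import Mathlib

section
/- Let E be a de Branges function, let N be a nearly invariant subspace of H(E) with no common zeros, let k_N be the reproducing kernel of N, and let α ∈ ℂ with Im α ≠ 0. Then k_N(α, α) ≠ 0, k_N(conj α, conj α) ≠ 0, and for all λ ∈ ℂ with λ ≠ conj α and all z ∈ ℂ with z ≠ α: ((z − conj α)/(z − α))·( k_N(λ, z) − (k_N(λ, α)/k_N(α, α))·k_N(α, z) ) − ((conj λ − conj α)/(conj λ − α))·k_N(λ, z) = −((conj λ − conj α)/(conj λ − α))·(k_N(λ, conj α)/k_N(conj α, conj α))·k_N(conj α, z). -/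
open Complex MeasureTheory Filter ComplexConjugate
open scoped ENNReal Topology

noncomputable section

/-- For an entire function `f`, `fStar f z = conj (f (conj z))`. -/
def fStar (f : ℂ → ℂ) : ℂ → ℂ := fun z => conj (f (conj z))

/-- A de Branges function: an entire function `E` with `|E(z)| > |E*(z)|` in the
upper half-plane. -/
def IsDeBrangesFunction (E : ℂ → ℂ) : Prop :=
  Differentiable ℂ E ∧ ∀ z : ℂ, 0 < z.im → ‖fStar E z‖ < ‖E z‖

/-- Membership in the Hardy space `H²(ℂ⁺)`: holomorphic on the upper half-plane with
uniformly bounded `L²`-means on horizontal lines. -/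
def MemHardyH2 (g : ℂ → ℂ) : Prop :=
  DifferentiableOn ℂ g {z : ℂ | 0 < z.im} ∧
  ∃ C : ℝ≥0∞, C < ⊤ ∧ ∀ y : ℝ, 0 < y →
    (∫⁻ x : ℝ, (‖g (x + y * Complex.I)‖₊ : ℝ≥0∞) ^ 2) ≤ C

/-- The de Branges space `H(E)` as a set of entire functions. -/
def deBrangesSpace (E : ℂ → ℂ) : Set (ℂ → ℂ) :=
  {f | Differentiable ℂ f ∧ MemHardyH2 (fun z => f z / E z) ∧
       MemHardyH2 (fun z => fStar f z / E z) ∧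
       (∫⁻ x : ℝ, (‖f x / E x‖₊ : ℝ≥0∞) ^ 2) < ⊤}

/-- The norm of `H(E)`: `‖f‖ = (∫_ℝ |f/E|² dx)^{1/2}`. -/
def dbNorm (E f : ℂ → ℂ) : ℝ := Real.sqrt (∫ x : ℝ, ‖f x / E x‖ ^ 2)

/-- The inner product of `H(E)`: `⟨f,g⟩ = ∫_ℝ f(x) conj (g x) |E(x)|⁻² dx`. -/
def dbInner (E f g : ℂ → ℂ) : ℂ :=
  ∫ x : ℝ, f x * conj (g x) * (((‖E x‖ ^ 2 : ℝ) : ℂ))⁻¹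

/-- `N` is a nearly invariant subspace of `H(E)` with no common zeros:
a norm-closed linear subspace of `H(E)` whose elements have no common zero, in which
zeros may be divided out. -/
def IsNearlyInvariantNoCommonZeros (E : ℂ → ℂ) (N : Set (ℂ → ℂ)) : Prop :=
  N ⊆ deBrangesSpace E ∧
  (fun _ => (0 : ℂ)) ∈ N ∧
  (∀ f ∈ N, ∀ g ∈ N, (fun z => f z + g z) ∈ N) ∧
  (∀ c : ℂ, ∀ f ∈ N, (fun z => c * f z) ∈ N) ∧
  (∀ f ∈ deBrangesSpace E,
    (∀ ε : ℝ, 0 < ε → ∃ g ∈ N, dbNorm E (fun z => f z - g z) < ε) → f ∈ N) ∧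
  (∀ lam : ℂ, ∃ f ∈ N, f lam ≠ 0) ∧
  (∀ f ∈ N, ∀ lam : ℂ, f lam = 0 → ∀ g : ℂ → ℂ, Differentiable ℂ g →
    (∀ z : ℂ, z ≠ lam → g z = f z / (z - lam)) → g ∈ N)

/-- `k` is the reproducing kernel of `N ⊆ H(E)`. -/
def IsReproducingKernel (E : ℂ → ℂ) (N : Set (ℂ → ℂ)) (k : ℂ → ℂ → ℂ) : Prop :=
  ∀ lam : ℂ, (fun z => k lam z) ∈ N ∧ ∀ f ∈ N, dbInner E f (fun z => k lam z) = f lam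

-- helper lemmas

theorem dbInner_conj (E f g : ℂ → ℂ) : conj (dbInner E f g) = dbInner E g f := by
  rw [dbInner, dbInner, ← integral_conj]
  refine congrArg _ (funext fun x => ?_)
  simp only [map_mul, map_inv₀, Complex.conj_conj, Complex.conj_ofReal]
  ring

theorem memdb (E : ℂ → ℂ) (hE : Differentiable ℂ E) {f : ℂ → ℂ} (hf : f ∈ deBrangesSpace E) :
    MemLp (fun x : ℝ => f x / E x) 2 volume := by
  obtain ⟨hdf, -, -, hint⟩ := hf
  refine ⟨((hdf.continuous.comp continuous_ofReal).measurable.div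
      (hE.continuous.comp continuous_ofReal).measurable).aestronglyMeasurable, ?_⟩
  rw [eLpNorm_eq_lintegral_rpow_enorm_toReal two_ne_zero ENNReal.ofNat_ne_top]
  refine ENNReal.rpow_lt_top_of_nonneg (by positivity) ?_
  have h2 : ∀ x : ℝ≥0∞, x ^ ((2 : ℝ≥0∞).toReal) = x ^ (2 : ℕ) := fun x => by
    rw [ENNReal.toReal_ofNat, ← ENNReal.rpow_natCast]; norm_num
  simp_rw [h2]
  exact hint.ne

theorem memconj {f : ℝ → ℂ} {μ : Measure ℝ} (hf : MemLp f 2 μ) :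
    MemLp (fun x => conj (f x)) 2 μ := by
  refine ⟨Complex.continuous_conj.comp_aestronglyMeasurable hf.1, ?_⟩
  rw [← eLpNorm_norm]
  simp only [RCLike.norm_conj]
  rw [eLpNorm_norm]
  exact hf.2

theorem weight_eq (E f g : ℂ → ℂ) (x : ℝ) :
    f x * conj (g x) * (((‖E x‖ ^ 2 : ℝ) : ℂ))⁻¹ = (f x / E x) * conj (g x / E x) := by
  rw [map_div₀, div_mul_div_comm, Complex.mul_conj, div_eq_mul_inv]
  congr 2
  norm_cast
  simp [Complex.normSq_eq_norm_sq]

theorem dbIntegrable (E : ℂ → ℂ) (hE : Differentiable ℂ E) {f g : ℂ → ℂ}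
    (hf : f ∈ deBrangesSpace E) (hg : g ∈ deBrangesSpace E) :
    Integrable (fun x : ℝ => f x * conj (g x) * (((‖E x‖ ^ 2 : ℝ) : ℂ))⁻¹) volume := by
  have hf2 := memdb E hE hf
  have hg2 := memconj (memdb E hE hg)
  have h1 := hg2.smul (φ := fun x : ℝ => f x / E x) (r := 1) hf2
  rw [memLp_one_iff_integrable] at h1
  refine h1.congr (Filter.Eventually.of_forall fun x => ?_)
  simp only [Pi.smul_apply', Pi.smul_apply, smul_eq_mul]
  exact (weight_eq E f g x).symm

theorem dbInner_add_smul_left (E : ℂ → ℂ) (f g h : ℂ → ℂ) (c : ℂ)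
    (h1 : Integrable (fun x : ℝ => f x * conj (h x) * (((‖E x‖ ^ 2 : ℝ) : ℂ))⁻¹) volume)
    (h2 : Integrable (fun x : ℝ => g x * conj (h x) * (((‖E x‖ ^ 2 : ℝ) : ℂ))⁻¹) volume) :
    dbInner E (fun z => f z + c * g z) h = dbInner E f h + c * dbInner E g h := by
  have heq : (fun x : ℝ => (f x + c * g x) * conj (h x) * (((‖E x‖ ^ 2 : ℝ) : ℂ))⁻¹)
      = fun x : ℝ => (f x * conj (h x) * (((‖E x‖ ^ 2 : ℝ) : ℂ))⁻¹)
        + c * (g x * conj (h x) * (((‖E x‖ ^ 2 : ℝ) : ℂ))⁻¹) := by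
    funext x; ring
  rw [dbInner, heq, integral_add h1 (h2.const_mul c), integral_const_mul, dbInner, dbInner]

theorem diff_dslope {f : ℂ → ℂ} (hf : Differentiable ℂ f) (a : ℂ) :
    Differentiable ℂ (dslope f a) := by
  intro w
  rcases eq_or_ne w a with rfl | hw
  · obtain ⟨p, hp⟩ := hf.analyticAt w
    exact hp.has_fpower_series_dslope_fslope.analyticAt.differentiableAt
  · have hev : (fun u => (f u - f a) / (u - a)) =ᶠ[𝓝 w] dslope f a := by
      filter_upwards [IsOpen.mem_nhds isOpen_compl_singleton hw] with u hu
      rw [dslope_of_ne f hu, slope_def_field]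
    exact (((hf.differentiableAt).sub_const (f a)).div
      ((differentiableAt_id).sub_const a) (sub_ne_zero.2 hw)).congr_of_eventuallyEq hev.symm

theorem entire_zero {h : ℂ → ℂ} (hh : Differentiable ℂ h) (h0 : ∀ᵐ x : ℝ, h x = 0) (w : ℂ) :
    h w = 0 := by
  have hA : AnalyticOnNhd ℂ h Set.univ := hh.differentiableOn.analyticOnNhd isOpen_univ
  have freq : ∃ᶠ u in 𝓝[≠] (0 : ℂ), h u = 0 := by
    rw [Filter.frequently_iff]
    intro U hU
    obtain ⟨ε, hε, hball⟩ := Metric.mem_nhdsWithin_iff.mp hU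
    have hne : ¬ (Set.Ioo (0 : ℝ) ε ⊆ {x : ℝ | ¬ h x = 0}) := by
      intro hsubset
      have h1 : volume (Set.Ioo (0 : ℝ) ε) = 0 := measure_mono_null hsubset (ae_iff.mp h0)
      rw [Real.volume_Ioo] at h1
      simp only [sub_zero] at h1
      rw [ENNReal.ofReal_eq_zero] at h1
      linarith
    rw [Set.not_subset] at hne
    obtain ⟨x, hx, hhx⟩ := hne
    simp only [Set.mem_setOf_eq, not_not] at hhx
    refine ⟨(x : ℂ), hball ⟨?_, ?_⟩, hhx⟩
    · simp only [Metric.mem_ball, Complex.dist_eq, sub_zero, Complex.norm_real, Real.norm_eq_abs]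
      rw [abs_of_pos hx.1]
      exact hx.2
    · simp only [Set.mem_compl_iff, Set.mem_singleton_iff]
      exact_mod_cast ne_of_gt hx.1
  have := hA.eqOn_zero_of_preconnected_of_frequently_eq_zero isPreconnected_univ
    (Set.mem_univ 0) freq (Set.mem_univ w)
  simpa using this

theorem ksymm (E : ℂ → ℂ) (N : Set (ℂ → ℂ)) (k : ℂ → ℂ → ℂ)
    (hk : IsReproducingKernel E N k) (a b : ℂ) : conj (k a b) = k b a := by
  have h1 := (hk b).2 _ (hk a).1
  have h2 := (hk a).2 _ (hk b).1
  rw [← h1, ← h2, dbInner_conj]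

theorem kdiag_ne (E : ℂ → ℂ) (hE : IsDeBrangesFunction E)
    (N : Set (ℂ → ℂ)) (hN : IsNearlyInvariantNoCommonZeros E N)
    (k : ℂ → ℂ → ℂ) (hk : IsReproducingKernel E N k) (β : ℂ) : k β β ≠ 0 := by
  obtain ⟨hsub, -, -, -, -, hnocz, -⟩ := hN
  intro h0
  have hgN : (fun z => k β z) ∈ N := (hk β).1
  have hgdb := hsub hgN
  have hgdiff : Differentiable ℂ (fun z => k β z) := hgdb.1
  have hEdiff := hE.1
  have h2 : MemLp (fun x : ℝ => k β x / E x) 2 volume := memdb E hEdiff hgdb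
  have hsq : Integrable (fun x : ℝ => ‖k β x / E x‖ ^ 2) volume :=
    (memLp_two_iff_integrable_sq_norm h2.1).mp h2
  have hval : dbInner E (fun z => k β z) (fun z => k β z) = 0 := by
    rw [(hk β).2 _ hgN]; exact h0
  have hre : (∫ x : ℝ, ‖k β x / E x‖ ^ 2) = 0 := by
    have h4 : dbInner E (fun z => k β z) (fun z => k β z)
        = ((∫ x : ℝ, ‖k β x / E x‖ ^ 2 : ℝ) : ℂ) := by
      rw [dbInner]
      have h5 : (fun x : ℝ => k β x * conj (k β x) * (((‖E x‖ ^ 2 : ℝ) : ℂ))⁻¹)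
          = fun x : ℝ => ((‖k β x / E x‖ ^ 2 : ℝ) : ℂ) := by
        funext x
        rw [weight_eq E _ _ x, Complex.mul_conj]
        norm_cast
        simp [Complex.normSq_eq_norm_sq, div_pow]
      rw [h5]
      exact integral_ofReal
    rw [hval] at h4
    exact_mod_cast h4.symm
  have hae : ∀ᵐ x : ℝ, ‖k β x / E x‖ ^ 2 = 0 := by
    have h3 := (integral_eq_zero_iff_of_nonneg (fun x => by positivity) hsq).mp hre
    filter_upwards [h3] with x hx
    exact hx
  have hprod : ∀ᵐ x : ℝ, (fun z => k β z * E z) x = 0 := by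
    filter_upwards [hae] with x hx
    rw [pow_eq_zero_iff (two_ne_zero), norm_eq_zero] at hx
    rcases div_eq_zero_iff.mp hx with h | h
    · simp only [h, zero_mul]
    · simp only [h, mul_zero]
  have hzero : ∀ w : ℂ, k β w * E w = 0 := fun w =>
    entire_zero (hgdiff.mul hEdiff) hprod w
  have hEI : E Complex.I ≠ 0 := by
    have h1 := hE.2 Complex.I (by simp)
    intro hcon
    rw [hcon, norm_zero] at h1
    exact (norm_nonneg _).not_gt h1
  have hg0 : ∀ w : ℂ, k β w = 0 := by
    intro w
    have freq : ∃ᶠ u in 𝓝[≠] Complex.I, k β u = 0 := by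
      have hev : ∀ᶠ u in 𝓝 Complex.I, E u ≠ 0 :=
        hEdiff.continuous.continuousAt.eventually_ne hEI
      have hev2 : ∀ᶠ u in 𝓝[≠] Complex.I, k β u = 0 := by
        filter_upwards [eventually_nhdsWithin_of_eventually_nhds hev] with u hu
        exact (mul_eq_zero.mp (hzero u)).resolve_right hu
      exact hev2.frequently
    have := (hgdiff.differentiableOn.analyticOnNhd
      isOpen_univ).eqOn_zero_of_preconnected_of_frequently_eq_zero isPreconnected_univ
      (Set.mem_univ Complex.I) freq (Set.mem_univ w)
    simpa using this
  obtain ⟨f, hfN, hfβ⟩ := hnocz β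
  have hfk := (hk β).2 f hfN
  rw [dbInner] at hfk
  simp only [hg0, map_zero, mul_zero, zero_mul, integral_zero] at hfk
  exact hfβ hfk.symm

/-- The kernel identity obtained in the proof of the structure of reproducing kernels of
nearly invariant subspaces. -/
theorem kernel_identity
    (E : ℂ → ℂ) (hE : IsDeBrangesFunction E)
    (N : Set (ℂ → ℂ)) (hN : IsNearlyInvariantNoCommonZeros E N)
    (k : ℂ → ℂ → ℂ) (hk : IsReproducingKernel E N k)
    (α : ℂ) (hα : α.im ≠ 0) :
    k α α ≠ 0 ∧ k (conj α) (conj α) ≠ 0 ∧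
    ∀ lam : ℂ, lam ≠ conj α → ∀ z : ℂ, z ≠ α →
      ((z - conj α) / (z - α)) * (k lam z - (k lam α / k α α) * k α z)
          - ((conj lam - conj α) / (conj lam - α)) * k lam z
        = -(((conj lam - conj α) / (conj lam - α))
            * (k lam (conj α) / k (conj α) (conj α)) * k (conj α) z) := by
  have hkαα : k α α ≠ 0 := kdiag_ne E hE N hN k hk α
  have hkbb : k (conj α) (conj α) ≠ 0 := kdiag_ne E hE N hN k hk (conj α)
  refine ⟨hkαα, hkbb, ?_⟩
  intro lam hlam z hz
  obtain ⟨hsub, hzmem, hadd, hsmul, hclosed, hnocz, hdivN⟩ := hN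
  have hEdiff := hE.1
  have hks : ∀ a b : ℂ, conj (k a b) = k b a := ksymm E N k hk
  -- basic nonvanishing of denominators
  have hba : conj α ≠ α := by
    intro hcon
    apply hα
    have h1 := congrArg Complex.im hcon
    simp only [Complex.conj_im] at h1
    linarith
  have hq : conj α - α ≠ 0 := sub_ne_zero.2 hba
  have hp : z - α ≠ 0 := sub_ne_zero.2 hz
  have hr : conj lam - α ≠ 0 := by
    refine sub_ne_zero.2 fun hcon => hlam ?_
    have := congrArg conj hcon
    rwa [Complex.conj_conj] at this
  have hxne : ∀ x : ℝ, (x : ℂ) ≠ α := by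
    intro x hcon
    apply hα
    rw [← hcon]
    simp
  have hxneb : ∀ x : ℝ, (x : ℂ) ≠ conj α := by
    intro x hcon
    apply hα
    have h1 := congrArg Complex.im hcon
    simp only [Complex.ofReal_im, Complex.conj_im] at h1
    linarith
  -- the two auxiliary functions and their difference quotients
  set d : ℂ := k lam α / k α α with hd
  set c : ℂ := k z (conj α) / k (conj α) (conj α) with hc
  set u : ℂ → ℂ := fun w => k lam w + -d * k α w with hu
  set v : ℂ → ℂ := fun w => k z w + -c * k (conj α) w with hv
  have huN : u ∈ N := hadd _ (hk lam).1 _ (hsmul (-d) _ (hk α).1)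
  have hvN : v ∈ N := hadd _ (hk z).1 _ (hsmul (-c) _ (hk (conj α)).1)
  have hudiff : Differentiable ℂ u := (hsub huN).1
  have hvdiff : Differentiable ℂ v := (hsub hvN).1
  have huα : u α = 0 := by
    rw [hu]
    simp only [hd]
    field_simp
    ring
  have hvb : v (conj α) = 0 := by
    rw [hv]
    simp only [hc]
    field_simp
    ring
  set F : ℂ → ℂ := dslope u α with hF
  set G : ℂ → ℂ := dslope v (conj α) with hG
  have hFdiff : Differentiable ℂ F := diff_dslope hudiff α
  have hGdiff : Differentiable ℂ G := diff_dslope hvdiff (conj α)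
  have hFval : ∀ w : ℂ, w ≠ α → F w = u w / (w - α) := by
    intro w hw
    rw [hF, dslope_of_ne u hw, slope_def_field, huα, sub_zero]
  have hGval : ∀ w : ℂ, w ≠ conj α → G w = v w / (w - conj α) := by
    intro w hw
    rw [hG, dslope_of_ne v hw, slope_def_field, hvb, sub_zero]
  have hFN : F ∈ N := hdivN u huN α huα F hFdiff hFval
  have hGN : G ∈ N := hdivN v hvN (conj α) hvb G hGdiff hGval
  -- the key inner-product identity
  have hkey : dbInner E F v = dbInner E u G := by
    rw [dbInner, dbInner]
    refine congrArg _ (funext fun x => ?_)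
    rw [hFval x (hxne x), hGval x (hxneb x), map_div₀, map_sub, Complex.conj_ofReal,
      Complex.conj_conj]
    ring
  -- expand both sides via reproducing property
  have hl : dbInner E v F = conj (F z) + -c * conj (F (conj α)) := by
    rw [hv, dbInner_add_smul_left E _ _ _ (-c)
      (dbIntegrable E hEdiff (hsub (hk z).1) (hsub hFN))
      (dbIntegrable E hEdiff (hsub (hk (conj α)).1) (hsub hFN)),
      ← dbInner_conj E F (fun w => k z w), ← dbInner_conj E F (fun w => k (conj α) w),
      (hk z).2 F hFN, (hk (conj α)).2 F hFN]
  have hLHS : dbInner E F v = F z + conj (-c) * F (conj α) := by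
    rw [← dbInner_conj E v F, hl, map_add, map_mul, Complex.conj_conj, Complex.conj_conj]
  have hRHS : dbInner E u G = conj (G lam) + -d * conj (G α) := by
    rw [hu, dbInner_add_smul_left E _ _ _ (-d)
      (dbIntegrable E hEdiff (hsub (hk lam).1) (hsub hGN))
      (dbIntegrable E hEdiff (hsub (hk α).1) (hsub hGN)),
      ← dbInner_conj E G (fun w => k lam w), ← dbInner_conj E G (fun w => k α w),
      (hk lam).2 G hGN, (hk α).2 G hGN]
  have hmain : F z + conj (-c) * F (conj α) = conj (G lam) + -d * conj (G α) := by
    rw [← hLHS, hkey, hRHS]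
  rw [hFval z hz, hFval (conj α) hba, hGval lam hlam, hGval α (Ne.symm hba)] at hmain
  rw [hu, hv] at hmain
  simp only [hc, hd] at hmain
  simp only [map_neg, map_div₀, map_mul, map_add, map_sub, Complex.conj_conj, hks] at hmain
  simp only [hd] at hmain ⊢
  field_simp at hmain ⊢
  refine mul_right_cancel₀ (b := (conj α - α) * k α α ^ 2 * k (conj α) (conj α) ^ 2)
    (by exact mul_ne_zero (mul_ne_zero hq (pow_ne_zero 2 hkαα)) (pow_ne_zero 2 hkbb)) ?_
  linear_combination (-((conj α - α) * k α α ^ 2 * k (conj α) (conj α) ^ 2)) * hmain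
end
end

section
/- Let F and G be entire functions satisfying: (i) F(z)·conj(F(conj z)) = G(z)·conj(G(conj z)) for all z ∈ ℂ; (ii) |F(z)| > |G(z)| for all z with Im z < 0; (iii) |F(z)| < |G(z)| for all z with Im z > 0. Then there exists an entire function U with U(z) ≠ 0 for every z ∈ ℂ such that conj(G(conj z)) = U(z)·F(z) for all z ∈ ℂ, and moreover |U(x)| = 1 for every x ∈ ℝ (in particular |F(x)| = |G(x)| for every x ∈ ℝ). -/
open Complex MeasureTheory Filter ComplexConjugate
open scoped ENNReal Topology

noncomputable section

lemma conj_tendsto_nhds (z : ℂ) :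
    Tendsto (fun w : ℂ => conj w) (𝓝 z) (𝓝 (conj z)) :=
  (Complex.continuous_conj.tendsto z)

lemma conj_tendsto_punctured (z : ℂ) :
    Tendsto (fun w : ℂ => conj w) (𝓝[≠] z) (𝓝[≠] (conj z)) := by
  rw [tendsto_nhdsWithin_iff]
  refine ⟨(conj_tendsto_nhds z).mono_left nhdsWithin_le_nhds, ?_⟩
  filter_upwards [self_mem_nhdsWithin] with w hw
  intro h
  exact hw (by simpa using congrArg (starRingEnd ℂ) h)

lemma fStar_hasDerivAt {f : ℂ → ℂ} {f' z : ℂ} (h : HasDerivAt f f' (conj z)) :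
    HasDerivAt (fStar f) (conj f') z := by
  rw [hasDerivAt_iff_tendsto_slope] at h ⊢
  have := (conj_tendsto_nhds f').comp (h.comp (conj_tendsto_punctured z))
  refine this.congr fun w => ?_
  simp only [Function.comp_apply, slope, fStar, vsub_eq_sub, smul_eq_mul]
  rw [map_mul, map_inv₀, map_sub, map_sub, Complex.conj_conj, Complex.conj_conj]

lemma fStar_differentiable {f : ℂ → ℂ} (hf : Differentiable ℂ f) :
    Differentiable ℂ (fStar f) := fun z =>
  (fStar_hasDerivAt ((hf (conj z)).hasDerivAt)).differentiableAt

lemma fStar_analyticAt {f : ℂ → ℂ} {z : ℂ} (hf : AnalyticAt ℂ f (conj z)) :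
    AnalyticAt ℂ (fStar f) z := by
  rw [analyticAt_iff_eventually_differentiableAt]
  have h1 : ∀ᶠ w in 𝓝 (conj z), DifferentiableAt ℂ f w :=
    hf.eventually_analyticAt.mono fun w hw => hw.differentiableAt
  filter_upwards [(conj_tendsto_nhds z).eventually h1] with w hw
  exact (fStar_hasDerivAt hw.hasDerivAt).differentiableAt

lemma order_ne_top' {f : ℂ → ℂ} (hf : Differentiable ℂ f) {w : ℂ} (hw : f w ≠ 0) (z : ℂ) :
    ∃ n : ℕ, (analyticOrderAt f z) = n := by
  have h : analyticOrderAt f z ≠ ⊤ := by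
    intro h
    rw [analyticOrderAt_eq_top] at h
    have hA : AnalyticOnNhd ℂ f Set.univ := fun u _ => hf.analyticAt u
    exact hw (hA.eqOn_zero_of_preconnected_of_eventuallyEq_zero isPreconnected_univ
      (Set.mem_univ z) h (Set.mem_univ w))
  exact ⟨(analyticOrderAt f z).toNat, (ENat.coe_toNat h).symm⟩

lemma fStar_order_eq {f : ℂ → ℂ} (hf : Differentiable ℂ f) {z₀ : ℂ} (hz : conj z₀ = z₀)
    {n : ℕ} (h : analyticOrderAt f z₀ = n) :
    (analyticOrderAt (fStar f) z₀) = n := by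
  rw [(hf.analyticAt z₀).analyticOrderAt_eq_natCast] at h
  rw [((fStar_differentiable hf).analyticAt z₀).analyticOrderAt_eq_natCast]
  obtain ⟨φ, hφa, hφ0, hφ⟩ := h
  refine ⟨fStar φ, fStar_analyticAt (by rwa [hz]), ?_, ?_⟩
  · simp only [fStar, hz, ne_eq]
    intro hc
    exact hφ0 (by simpa using congrArg (starRingEnd ℂ) hc)
  · have ht : Tendsto (fun w : ℂ => conj w) (𝓝 z₀) (𝓝 z₀) := by
      simpa [hz] using conj_tendsto_nhds z₀
    filter_upwards [ht.eventually hφ] with z hzz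
    have := congrArg (starRingEnd ℂ) hzz
    simp only [smul_eq_mul, map_mul, map_pow, map_sub, Complex.conj_conj, hz] at this ⊢
    simpa [fStar] using this

/-- Claims (a) and (b) of Lemma 3: `U = G*/F` is a zero-free entire function which is
unimodular on the real axis. -/
theorem U_entire_nonvanishing_unimodular
    (F G : ℂ → ℂ) (hF : Differentiable ℂ F) (hG : Differentiable ℂ G)
    (h1 : ∀ z : ℂ, F z * conj (F (conj z)) = G z * conj (G (conj z)))
    (h2 : ∀ z : ℂ, z.im < 0 → ‖G z‖ < ‖F z‖)
    (h3 : ∀ z : ℂ, 0 < z.im → ‖F z‖ < ‖G z‖) :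
    ∃ U : ℂ → ℂ, Differentiable ℂ U ∧ (∀ z : ℂ, U z ≠ 0) ∧
      (∀ z : ℂ, conj (G (conj z)) = U z * F z) ∧
      (∀ x : ℝ, ‖U x‖ = 1) ∧
      (∀ x : ℝ, ‖F x‖ = ‖G x‖) := by
  set Fs : ℂ → ℂ := fStar F with hFsdef
  set Gs : ℂ → ℂ := fStar G with hGsdef
  have hFs : Differentiable ℂ Fs := fStar_differentiable hF
  have hGs : Differentiable ℂ Gs := fStar_differentiable hG
  have h1' : ∀ z : ℂ, F z * Fs z = G z * Gs z := h1
  -- nonvanishing in half planes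
  have hF0 : ∀ z : ℂ, z.im < 0 → F z ≠ 0 := by
    intro z hz h
    exact ((norm_nonneg (G z)).not_gt (by simpa [h] using h2 z hz))
  have hG0 : ∀ z : ℂ, 0 < z.im → G z ≠ 0 := by
    intro z hz h
    exact ((norm_nonneg (F z)).not_gt (by simpa [h] using h3 z hz))
  have hFs0 : ∀ z : ℂ, 0 < z.im → Fs z ≠ 0 := by
    intro z hz h
    have : F (conj z) = 0 := by simpa [hFsdef, fStar] using congrArg (starRingEnd ℂ) h
    exact hF0 (conj z) (by simpa [Complex.conj_im] using hz) this
  have hGs0 : ∀ z : ℂ, z.im < 0 → Gs z ≠ 0 := by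
    intro z hz h
    have : G (conj z) = 0 := by simpa [hGsdef, fStar] using congrArg (starRingEnd ℂ) h
    exact hG0 (conj z) (by simpa [Complex.conj_im] using hz) this
  -- global nonvanishing witnesses
  have hFI : F (-Complex.I) ≠ 0 := hF0 _ (by simp)
  have hGI : G Complex.I ≠ 0 := hG0 _ (by simp)
  have hFsI : Fs Complex.I ≠ 0 := hFs0 _ (by simp)
  have hGsI : Gs (-Complex.I) ≠ 0 := hGs0 _ (by simp)
  -- the key factorization lemma
  have key : ∀ z₀ : ℂ, ∃ (n : ℕ) (f g : ℂ → ℂ), AnalyticAt ℂ f z₀ ∧ AnalyticAt ℂ g z₀ ∧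
      f z₀ ≠ 0 ∧ g z₀ ≠ 0 ∧ (∀ᶠ z in 𝓝 z₀, F z = (z - z₀) ^ n * f z) ∧
      (∀ᶠ z in 𝓝 z₀, Gs z = (z - z₀) ^ n * g z) := by
    intro z₀
    obtain ⟨nF, hnF⟩ := order_ne_top' hF hFI z₀
    obtain ⟨nG, hnG⟩ := order_ne_top' hG hGI z₀
    obtain ⟨nFs, hnFs⟩ := order_ne_top' hFs hFsI z₀
    obtain ⟨nGs, hnGs⟩ := order_ne_top' hGs hGsI z₀
    obtain ⟨fF, hfFa, hfF0, hfF⟩ := (hF.analyticAt z₀).analyticOrderAt_eq_natCast.mp hnF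
    obtain ⟨fG, hfGa, hfG0, hfG⟩ := (hG.analyticAt z₀).analyticOrderAt_eq_natCast.mp hnG
    obtain ⟨fFs, hfFsa, hfFs0, hfFs⟩ := (hFs.analyticAt z₀).analyticOrderAt_eq_natCast.mp hnFs
    obtain ⟨fGs, hfGsa, hfGs0, hfGs⟩ := (hGs.analyticAt z₀).analyticOrderAt_eq_natCast.mp hnGs
    -- order additivity via uniqueness on H = F * Fs
    have hHa : AnalyticAt ℂ (fun z => F z * Fs z) z₀ :=
      (hF.analyticAt z₀).mul (hFs.analyticAt z₀)
    have e1 : analyticOrderAt (fun z => F z * Fs z) z₀ = ((nF + nFs : ℕ) : ℕ∞) := by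
      rw [hHa.analyticOrderAt_eq_natCast]
      refine ⟨fun z => fF z * fFs z, hfFa.mul hfFsa, mul_ne_zero hfF0 hfFs0, ?_⟩
      filter_upwards [hfF, hfFs] with z e1 e2
      simp only [smul_eq_mul] at *
      rw [e1, e2]; ring
    have e2 : analyticOrderAt (fun z => F z * Fs z) z₀ = ((nG + nGs : ℕ) : ℕ∞) := by
      rw [hHa.analyticOrderAt_eq_natCast]
      refine ⟨fun z => fG z * fGs z, hfGa.mul hfGsa, mul_ne_zero hfG0 hfGs0, ?_⟩
      filter_upwards [hfG, hfGs] with z e1 e2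
      simp only [smul_eq_mul] at *
      rw [h1' z, e1, e2]; ring
    have hsum : nF + nFs = nG + nGs := by
      have := e1.symm.trans e2
      exact_mod_cast this
    -- case analysis on im z₀
    have zero_of_ne : ∀ (f : ℂ → ℂ) (n : ℕ) (φ : ℂ → ℂ), φ z₀ ≠ 0 →
        (∀ᶠ z in 𝓝 z₀, f z = (z - z₀) ^ n • φ z) → f z₀ ≠ 0 → n = 0 := by
      intro f n φ hφ0 hev hf0
      by_contra hn
      have := hev.self_of_nhds
      simp [sub_self, zero_pow hn] at this
      exact hf0 this
    have hmain : nF = nGs := by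
      rcases lt_trichotomy z₀.im 0 with him | him | him
      · have h1 : nF = 0 := zero_of_ne F nF fF hfF0 hfF (hF0 z₀ him)
        have h2 : nGs = 0 := zero_of_ne Gs nGs fGs hfGs0 hfGs (hGs0 z₀ him)
        rw [h1, h2]
      · -- real point
        have hz : conj z₀ = z₀ := Complex.conj_eq_iff_im.mpr him
        have hFs' : (analyticOrderAt (fStar F) z₀) = (nF : ℕ∞) :=
          fStar_order_eq hF hz hnF
        have hGs' : (analyticOrderAt (fStar G) z₀) = (nG : ℕ∞) :=
          fStar_order_eq hG hz hnG
        have eFs : nFs = nF := by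
          have := hnFs.symm.trans hFs'
          exact_mod_cast this
        have eGs : nGs = nG := by
          have := hnGs.symm.trans hGs'
          exact_mod_cast this
        omega
      · have h1 : nFs = 0 := zero_of_ne Fs nFs fFs hfFs0 hfFs (hFs0 z₀ him)
        have h2 : nG = 0 := zero_of_ne G nG fG hfG0 hfG (hG0 z₀ him)
        omega
    refine ⟨nF, fF, fGs, hfFa, hfGsa, hfF0, hfGs0, ?_, ?_⟩
    · filter_upwards [hfF] with z hzz; simpa [smul_eq_mul] using hzz
    · rw [hmain]; filter_upwards [hfGs] with z hzz; simpa [smul_eq_mul] using hzz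
  -- define U
  set U : ℂ → ℂ := fun z =>
    if F z = 0 then limUnder (𝓝[≠] z) (fun w => Gs w / F w) else Gs z / F z with hUdef
  -- local description of U
  have hUloc : ∀ z₀ : ℂ, ∃ f g : ℂ → ℂ, AnalyticAt ℂ f z₀ ∧ AnalyticAt ℂ g z₀ ∧
      f z₀ ≠ 0 ∧ g z₀ ≠ 0 ∧ U =ᶠ[𝓝 z₀] fun z => g z / f z := by
    intro z₀
    obtain ⟨n, f, g, hfa, hga, hf0, hg0, hFf, hGg⟩ := key z₀
    refine ⟨f, g, hfa, hga, hf0, hg0, ?_⟩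
    have hfne : ∀ᶠ z in 𝓝 z₀, f z ≠ 0 := hfa.continuousAt.eventually_ne hf0
    have hmain : ∀ᶠ z in 𝓝 z₀, (F z = (z - z₀) ^ n * f z ∧ Gs z = (z - z₀) ^ n * g z)
        ∧ f z ≠ 0 := (hFf.and hGg).and hfne
    have hpunct : ∀ᶠ z in 𝓝[≠] z₀, Gs z / F z = g z / f z := by
      filter_upwards [hmain.filter_mono nhdsWithin_le_nhds, self_mem_nhdsWithin]
        with z hz hne
      obtain ⟨⟨e1, e2⟩, e3⟩ := hz
      have hpow : (z - z₀) ^ n ≠ 0 := pow_ne_zero _ (sub_ne_zero.mpr hne)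
      rw [e1, e2, mul_div_mul_left _ _ hpow]
    filter_upwards [hmain] with z hz
    obtain ⟨⟨e1, e2⟩, e3⟩ := hz
    by_cases hzz : z = z₀
    · subst hzz
      by_cases hFz : F z = 0
      · -- limit case
        have hn : n ≠ 0 := by
          intro hn
          rw [hn] at e1; simp at e1; rw [e1] at hFz; exact e3 hFz
        have htend : Tendsto (fun w => Gs w / F w) (𝓝[≠] z) (𝓝 (g z / f z)) := by
          have : Tendsto (fun w => g w / f w) (𝓝[≠] z) (𝓝 (g z / f z)) :=
            ((hga.continuousAt.tendsto.div hfa.continuousAt.tendsto e3).mono_left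
              nhdsWithin_le_nhds)
          exact Tendsto.congr' (hpunct.mono fun w h => h.symm) this
        simp only [hUdef, hFz, if_true]
        exact htend.limUnder_eq
      · simp only [hUdef, hFz, if_false]
        have hn : n = 0 := by
          by_contra hn
          rw [e1] at hFz; simp [zero_pow hn] at hFz
        rw [hn] at e1 e2
        simp at e1 e2
        rw [e1, e2]
    · have hne : F z ≠ 0 := by
        rw [e1]
        exact mul_ne_zero (pow_ne_zero _ (sub_ne_zero.mpr hzz)) e3
      simp only [hUdef, hne, if_false]
      have hpow : (z - z₀) ^ n ≠ 0 := pow_ne_zero _ (sub_ne_zero.mpr hzz)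
      rw [e1, e2, mul_div_mul_left _ _ hpow]
  -- U is differentiable and nonvanishing
  have hUdiff : Differentiable ℂ U := by
    intro z₀
    obtain ⟨f, g, hfa, hga, hf0, hg0, heq⟩ := hUloc z₀
    exact ((hga.div hfa hf0).differentiableAt).congr_of_eventuallyEq heq
  have hUne : ∀ z : ℂ, U z ≠ 0 := by
    intro z₀
    obtain ⟨f, g, hfa, hga, hf0, hg0, heq⟩ := hUloc z₀
    rw [heq.self_of_nhds]
    exact div_ne_zero hg0 hf0
  -- the functional equation
  have hEq : ∀ z : ℂ, Gs z = U z * F z := by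
    intro z
    by_cases hFz : F z = 0
    · obtain ⟨n, f, g, hfa, hga, hf0, hg0, hFf, hGg⟩ := key z
      have e1 := hFf.self_of_nhds
      have e2 := hGg.self_of_nhds
      have hn : n ≠ 0 := by
        intro hn
        rw [hn] at e1; simp at e1; rw [e1] at hFz; exact hf0 hFz
      rw [hFz, mul_zero, e2]
      simp [zero_pow hn]
    · simp only [hUdef, hFz, if_false]
      rw [div_mul_cancel₀ _ hFz]
  -- |F| = |G| on ℝ
  have habsFG : ∀ x : ℝ, ‖F x‖ = ‖G x‖ := by
    intro x
    have h := h1 (x : ℂ)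
    rw [Complex.conj_ofReal, Complex.mul_conj, Complex.mul_conj] at h
    have : Complex.normSq (F x) = Complex.normSq (G x) := by exact_mod_cast h
    rw [Complex.normSq_eq_norm_sq, Complex.normSq_eq_norm_sq] at this
    exact (sq_eq_sq₀ (norm_nonneg _) (norm_nonneg _)).mp this
  -- |U| = 1 on ℝ, first for points where F ≠ 0
  have hU1 : ∀ x : ℝ, F (x : ℂ) ≠ 0 → ‖U x‖ = 1 := by
    intro x hx
    simp only [hUdef, hx, if_false]
    rw [norm_div]
    have hGsx : ‖Gs x‖ = ‖G x‖ := by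
      simp [hGsdef, fStar, Complex.conj_ofReal]
    rw [hGsx, ← habsFG x, div_self]
    simpa using hx
  have hUabs : ∀ x : ℝ, ‖U x‖ = 1 := by
    intro x
    by_cases hx : F (x : ℂ) ≠ 0
    · exact hU1 x hx
    · push_neg at hx
      -- F vanishes at x; use continuity along the real axis
      obtain ⟨n, f, g, hfa, hga, hf0, hg0, hFf, hGg⟩ := key (x : ℂ)
      have hfne : ∀ᶠ z in 𝓝 (x : ℂ), f z ≠ 0 := hfa.continuousAt.eventually_ne hf0
      have hFne : ∀ᶠ z in 𝓝[≠] (x : ℂ), F z ≠ 0 := by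
        filter_upwards [(hFf.and hfne).filter_mono nhdsWithin_le_nhds,
          self_mem_nhdsWithin] with z hz hne
        rw [hz.1]
        exact mul_ne_zero (pow_ne_zero _ (sub_ne_zero.mpr hne)) hz.2
      have htc : Tendsto (fun y : ℝ => (y : ℂ)) (𝓝[≠] x) (𝓝[≠] (x : ℂ)) := by
        rw [tendsto_nhdsWithin_iff]
        refine ⟨(Complex.continuous_ofReal.tendsto x).mono_left nhdsWithin_le_nhds, ?_⟩
        filter_upwards [self_mem_nhdsWithin] with y hy
        exact fun h => hy (by simpa using h)
      have hev : ∀ᶠ y : ℝ in 𝓝[≠] x, ‖U (y : ℂ)‖ = 1 := by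
        filter_upwards [htc.eventually hFne] with y hy
        exact hU1 y hy
      have ht1 : Tendsto (fun y : ℝ => ‖U y‖) (𝓝[≠] x) (𝓝 (‖U x‖)) := by
        have : Continuous fun y : ℝ => ‖U y‖ :=
          continuous_norm.comp (hUdiff.continuous.comp Complex.continuous_ofReal)
        exact (this.tendsto x).mono_left nhdsWithin_le_nhds
      have ht2 : Tendsto (fun y : ℝ => ‖U y‖) (𝓝[≠] x) (𝓝 1) :=
        Tendsto.congr' (hev.mono fun y h => h.symm) tendsto_const_nhds
      exact tendsto_nhds_unique ht1 ht2
  exact ⟨U, hUdiff, hUne, fun z => hEq z, hUabs, habsFG⟩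
end
end
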